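/- Let m, n be positive natural numbers with m ≤ n, q ∈ (0,1), and define f(h,s) = [(q - s(1-q))/(1-hs)]·(1+h)·log₂(m(1+h)) + [((1-q) - hq)/(1-hs)]·(1+s)·log₂(n(1+s)) on the domain h ∈ [0,(1-q)/q], s ∈ [0, q/(1-q)], excluding the point ((1-q)/q, q/(1-q)). If m/n ≥ 1/e then the minimum of f equals q·log₂ m + (1-q)·log₂ n; if m/n < 1/e and q ≥ em/n the minimum equals log₂(m/q); if m/n < 1/e and q < em/n the minimum equals log₂ n - q·n·log₂(e)/(m·e). -/

import Mathlib

private lemma logb2_key {x : ℝ} (hx : 0 < x) :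
    Real.logb 2 x ≤ (x - 1) * Real.logb 2 (Real.exp 1) := by
  have h2 : (0:ℝ) < Real.log 2 := Real.log_pos (by norm_num)
  have hL : Real.logb 2 (Real.exp 1) = 1 / Real.log 2 := by
    rw [Real.logb, Real.log_exp]
  rw [Real.logb, hL, div_le_iff₀ h2]
  calc Real.log x ≤ x - 1 := Real.log_le_sub_one_of_pos hx
    _ = (x-1) * (1/Real.log 2) * Real.log 2 := by field_simp

private lemma f_setup (q h s : ℝ) (hq0 : 0 < q) (hq1 : q < 1)
    (hh0 : 0 ≤ h) (hh1 : h ≤ (1-q)/q) (hs0 : 0 ≤ s) (hs1 : s ≤ q/(1-q))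
    (hc : ¬(h = (1-q)/q ∧ s = q/(1-q))) :
    ∃ a : ℝ, 0 ≤ a ∧ a ≤ 1 ∧ a/(1+h) ≤ q ∧ a/(1+h) + (1-a)*(s/(1+s)) = q ∧
      (q - s*(1-q))/(1 - h*s) * (1+h) = a ∧ ((1-q) - h*q)/(1 - h*s) * (1+s) = 1 - a := by
  have hq1' : (0:ℝ) < 1 - q := by linarith
  have hh1' : h * q ≤ 1 - q := by
    rw [le_div_iff₀ hq0] at hh1; linarith
  have hs1' : s * (1 - q) ≤ q := by
    rw [le_div_iff₀ hq1'] at hs1; linarith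
  have hD : 0 < 1 - h * s := by
    rcases eq_or_lt_of_le hh1 with he | hlt
    · -- h = (1-q)/q, so s < q/(1-q)
      have hsne : s ≠ q/(1-q) := fun hs => hc ⟨he, hs⟩
      have hslt : s * (1-q) < q := by
        rcases lt_of_le_of_ne hs1 hsne with h'
        calc s * (1-q) < (q/(1-q)) * (1-q) := by
              exact mul_lt_mul_of_pos_right h' hq1'
          _ = q := by field_simp
      have : h * q = 1 - q := by rw [he]; field_simp
      nlinarith
    · have hhlt : h * q < 1 - q := by
        calc h * q < ((1-q)/q) * q := mul_lt_mul_of_pos_right hlt hq0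
          _ = 1 - q := by field_simp
      nlinarith
  have hH : (0:ℝ) < 1 + h := by linarith
  have hS : (0:ℝ) < 1 + s := by linarith
  refine ⟨(q - s*(1-q))/(1 - h*s) * (1+h), ?_, ?_, ?_, ?_, rfl, ?_⟩
  · have : 0 ≤ q - s*(1-q) := by linarith
    positivity
  · rw [div_mul_eq_mul_div, div_le_one hD]; nlinarith
  · rw [div_mul_eq_mul_div, div_div, div_le_iff₀ (by positivity)]
    nlinarith [mul_nonneg (mul_nonneg hs0 (by linarith : (0:ℝ) ≤ 1 - q - h*q)) hH.le]
  · have hD2 : (1:ℝ) - s*h ≠ 0 := by rw [mul_comm]; exact hD.ne'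
    field_simp [hD.ne', hD2, hH.ne', hS.ne']
    ring
  · field_simp
    ring

private lemma case1 (m n : ℝ) (hm : 0 < m) (hn : 0 < n) (hmn : m ≤ n)
    (hen : n ≤ Real.exp 1 * m)
    (q a h s : ℝ) (hq0 : 0 < q) (hh0 : 0 ≤ h) (hs0 : 0 ≤ s)
    (ha0 : 0 ≤ a) (ha1 : a ≤ 1) (hau : a/(1+h) ≤ q) :
    q * Real.logb 2 m + (1-q) * Real.logb 2 n ≤
      a * Real.logb 2 (m*(1+h)) + (1-a) * Real.logb 2 (n*(1+s)) := by
  have hH : (0:ℝ) < 1 + h := by linarith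
  have hS : (0:ℝ) < 1 + s := by linarith
  have hLpos : 0 < Real.logb 2 (Real.exp 1) := by
    rw [Real.logb, Real.log_exp]
    exact div_pos one_pos (Real.log_pos (by norm_num))
  set L := Real.logb 2 (Real.exp 1) with hLdef
  have e1 : Real.logb 2 (m*(1+h)) = Real.logb 2 m + Real.logb 2 (1+h) :=
    Real.logb_mul (ne_of_gt hm) (ne_of_gt hH)
  have e2 : Real.logb 2 (n*(1+s)) = Real.logb 2 n + Real.logb 2 (1+s) :=
    Real.logb_mul (ne_of_gt hn) (ne_of_gt hS)
  have lh : 0 ≤ Real.logb 2 (1+h) := Real.logb_nonneg (by norm_num) (by linarith)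
  have ls : 0 ≤ Real.logb 2 (1+s) := Real.logb_nonneg (by norm_num) (by linarith)
  rw [e1, e2]
  rcases le_or_gt a q with hc | hc
  · have hmn' : Real.logb 2 m ≤ Real.logb 2 n :=
      Real.logb_le_logb_of_le (by norm_num) hm hmn
    nlinarith [mul_nonneg ha0 lh, mul_nonneg (by linarith : (0:ℝ) ≤ 1 - a) ls,
      mul_nonneg (by linarith : (0:ℝ) ≤ q - a) (by linarith : (0:ℝ) ≤ Real.logb 2 n - Real.logb 2 m)]
  · -- q < a
    have hnm : Real.logb 2 n ≤ Real.logb 2 m + L := by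
      have : Real.logb 2 n ≤ Real.logb 2 (Real.exp 1 * m) :=
        Real.logb_le_logb_of_le (by norm_num) hn hen
      rwa [Real.logb_mul (ne_of_gt (Real.exp_pos 1)) (ne_of_gt hm), add_comm] at this
    have kH : (1 - (1+h)⁻¹) * L ≤ Real.logb 2 (1+h) := by
      have := logb2_key (x := (1+h)⁻¹) (by positivity)
      rw [Real.logb_inv, ← hLdef] at this
      nlinarith [this]
    have h1 : a * ((1 - (1+h)⁻¹) * L) ≤ a * Real.logb 2 (1+h) :=
      mul_le_mul_of_nonneg_left kH ha0
    have h2 : a * (1+h)⁻¹ = a/(1+h) := by ring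
    nlinarith [mul_nonneg (by linarith : (0:ℝ) ≤ 1 - a) ls,
      mul_nonneg (by linarith : (0:ℝ) ≤ q - a/(1+h)) hLpos.le,
      mul_nonneg (by linarith : (0:ℝ) ≤ a - q)
        (by linarith : (0:ℝ) ≤ Real.logb 2 m + L - Real.logb 2 n)]


private lemma case2 (m n q a h s : ℝ) (hm : 0 < m) (hn : 0 < n)
    (hen : Real.exp 1 * m ≤ q * n) (hq0 : 0 < q) (hh0 : 0 ≤ h) (hs0 : 0 ≤ s)
    (ha0 : 0 ≤ a) (ha1 : a ≤ 1) (hau : a/(1+h) ≤ q) :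
    Real.logb 2 (m/q) ≤
      a * Real.logb 2 (m*(1+h)) + (1-a) * Real.logb 2 (n*(1+s)) := by
  have hH : (0:ℝ) < 1 + h := by linarith
  have hS : (0:ℝ) < 1 + s := by linarith
  have hLpos : 0 < Real.logb 2 (Real.exp 1) := by
    rw [Real.logb, Real.log_exp]
    exact div_pos one_pos (Real.log_pos (by norm_num))
  set L := Real.logb 2 (Real.exp 1) with hLdef
  have e1 : Real.logb 2 (m*(1+h)) = Real.logb 2 m + Real.logb 2 (1+h) :=
    Real.logb_mul (ne_of_gt hm) (ne_of_gt hH)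
  have e2 : Real.logb 2 (n*(1+s)) = Real.logb 2 n + Real.logb 2 (1+s) :=
    Real.logb_mul (ne_of_gt hn) (ne_of_gt hS)
  have e3 : Real.logb 2 (m/q) = Real.logb 2 m - Real.logb 2 q :=
    Real.logb_div (ne_of_gt hm) (ne_of_gt hq0)
  have ls : 0 ≤ Real.logb 2 (1+s) := Real.logb_nonneg (by norm_num) (by linarith)
  have hmain : Real.logb 2 m + L ≤ Real.logb 2 q + Real.logb 2 n := by
    have h1 : Real.logb 2 (Real.exp 1 * m) ≤ Real.logb 2 (q * n) :=
      Real.logb_le_logb_of_le (by norm_num) (by positivity) hen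
    rwa [Real.logb_mul (ne_of_gt (Real.exp_pos 1)) (ne_of_gt hm),
      Real.logb_mul (ne_of_gt hq0) (ne_of_gt hn), ← hLdef, add_comm L] at h1
  have kH : (1 - (1+h)⁻¹/q) * L - Real.logb 2 q ≤ Real.logb 2 (1+h) := by
    have hk := logb2_key (x := (1+h)⁻¹/q) (by positivity)
    rw [Real.logb_div (by positivity) (ne_of_gt hq0), Real.logb_inv, ← hLdef] at hk
    nlinarith [hk]
  have h1 : a * ((1 - (1+h)⁻¹/q) * L - Real.logb 2 q) ≤ a * Real.logb 2 (1+h) :=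
    mul_le_mul_of_nonneg_left kH ha0
  have hfr : (a/(1+h))/q ≤ 1 := (div_le_one hq0).mpr hau
  have h1' : a*L - ((a/(1+h))/q)*L - a*Real.logb 2 q ≤ a * Real.logb 2 (1+h) := by
    calc a*L - ((a/(1+h))/q)*L - a*Real.logb 2 q
        = a * ((1 - (1+h)⁻¹/q) * L - Real.logb 2 q) := by ring
      _ ≤ a * Real.logb 2 (1+h) := h1
  have t2 : ((a/(1+h))/q)*L ≤ L := by
    calc ((a/(1+h))/q)*L ≤ 1*L := mul_le_mul_of_nonneg_right hfr hLpos.le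
      _ = L := one_mul L
  rw [e1, e2, e3]
  nlinarith [mul_nonneg (by linarith : (0:ℝ) ≤ 1 - a) ls, t2, h1',
    mul_nonneg (by linarith : (0:ℝ) ≤ 1 - a)
      (by linarith : (0:ℝ) ≤ Real.logb 2 q + Real.logb 2 n - Real.logb 2 m - L)]

private lemma case3 (m n : ℝ) (hm : 0 < m) (hn : 0 < n)
    (q a h s : ℝ) (hq0 : 0 < q) (hh0 : 0 ≤ h) (hs0 : 0 ≤ s)
    (ha0 : 0 ≤ a) (ha1 : a ≤ 1) (hau : a/(1+h) ≤ q)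
    (hcon : a/(1+h) + (1-a)*(s/(1+s)) = q) :
    Real.logb 2 n - q * (n * Real.logb 2 (Real.exp 1)) / (m * Real.exp 1) ≤
      a * Real.logb 2 (m*(1+h)) + (1-a) * Real.logb 2 (n*(1+s)) := by
  have hH : (0:ℝ) < 1 + h := by linarith
  have hS : (0:ℝ) < 1 + s := by linarith
  have he : (0:ℝ) < Real.exp 1 := Real.exp_pos 1
  have hLpos : 0 < Real.logb 2 (Real.exp 1) := by
    rw [Real.logb, Real.log_exp]
    exact div_pos one_pos (Real.log_pos (by norm_num))
  set L := Real.logb 2 (Real.exp 1) with hLdef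
  set A := q * n / (Real.exp 1 * m) with hA
  have hApos : 0 < A := by positivity
  have hcgoal : q * (n * L) / (m * Real.exp 1) = A * L := by
    rw [hA]; field_simp
  have e1 : Real.logb 2 (m*(1+h)) = Real.logb 2 m + Real.logb 2 (1+h) :=
    Real.logb_mul (ne_of_gt hm) (ne_of_gt hH)
  have e2 : Real.logb 2 (n*(1+s)) = Real.logb 2 n + Real.logb 2 (1+s) :=
    Real.logb_mul (ne_of_gt hn) (ne_of_gt hS)
  have eAq : A / q = n / (Real.exp 1 * m) := by
    rw [hA]; field_simp
  have LA : Real.logb 2 (A/q) = Real.logb 2 n - Real.logb 2 m - L := by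
    rw [eAq, Real.logb_div (ne_of_gt hn) (by positivity),
      Real.logb_mul (ne_of_gt he) (ne_of_gt hm), ← hLdef]
    ring
  have kH : (1 - (1+h)⁻¹ * (A/q)) * L + (Real.logb 2 n - Real.logb 2 m - L)
      ≤ Real.logb 2 (1+h) := by
    have hk := logb2_key (x := (1+h)⁻¹ * (A/q)) (by positivity)
    rw [Real.logb_mul (by positivity) (by positivity), Real.logb_inv, LA, ← hLdef] at hk
    nlinarith [hk]
  have kS : (s/(1+s)) * L ≤ Real.logb 2 (1+s) := by
    have hk := logb2_key (x := (1+s)⁻¹) (by positivity)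
    rw [Real.logb_inv, ← hLdef] at hk
    have : (1:ℝ) - (1+s)⁻¹ = s/(1+s) := by field_simp; ring
    nlinarith [hk, this]
  have h1 : a * ((1 - (1+h)⁻¹ * (A/q)) * L + (Real.logb 2 n - Real.logb 2 m - L))
      ≤ a * Real.logb 2 (1+h) := mul_le_mul_of_nonneg_left kH ha0
  have h1' : a*L - ((a/(1+h))/q)*(A*L) + a*(Real.logb 2 n - Real.logb 2 m - L)
      ≤ a * Real.logb 2 (1+h) := by
    calc a*L - ((a/(1+h))/q)*(A*L) + a*(Real.logb 2 n - Real.logb 2 m - L)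
        = a * ((1 - (1+h)⁻¹ * (A/q)) * L + (Real.logb 2 n - Real.logb 2 m - L)) := by ring
      _ ≤ a * Real.logb 2 (1+h) := h1
  have h2 : (1-a) * ((s/(1+s)) * L) ≤ (1-a) * Real.logb 2 (1+s) :=
    mul_le_mul_of_nonneg_left kS (by linarith)
  have h2'' : (q - a/(1+h)) * L ≤ (1-a) * Real.logb 2 (1+s) := by
    have hcc : (1-a) * (s/(1+s)) = q - a/(1+h) := by linarith
    calc (q - a/(1+h)) * L = (1-a) * ((s/(1+s)) * L) := by rw [← hcc]; ring
      _ ≤ (1-a) * Real.logb 2 (1+s) := h2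
  have hfr : (a/(1+h))/q ≤ 1 := (div_le_one hq0).mpr hau
  have t1 : ((a/(1+h))/q)*(A*L) ≤ A*L := by
    calc ((a/(1+h))/q)*(A*L) ≤ 1*(A*L) :=
          mul_le_mul_of_nonneg_right hfr (by positivity)
      _ = A*L := one_mul _
  have t2 : (0:ℝ) ≤ (q - a/(1+h)) * L :=
    mul_nonneg (by linarith : (0:ℝ) ≤ q - a/(1+h)) hLpos.le
  rw [e1, e2, hcgoal]
  nlinarith [h1', h2'', t1, t2]

/-- Lemma `le:fhs`: minimum of the boundary function `f(h,s)` arising in the computation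
of the convex-roof logarithmic GM of rank-2 maximally correlated qudit states, depending
on the parameters `m ≤ n` and `q ∈ (0,1)`. -/
theorem min_f_h_s (m n : ℕ) (hm : 0 < m) (hmn : m ≤ n)
    (q : ℝ) (hq0 : 0 < q) (hq1 : q < 1)
    (f : ℝ → ℝ → ℝ)
    (hf : ∀ h s : ℝ, f h s =
      ((q - s*(1-q))/(1 - h*s)) * (1+h) * Real.logb 2 ((m : ℝ)*(1+h)) +
      (((1-q) - h*q)/(1 - h*s)) * (1+s) * Real.logb 2 ((n : ℝ)*(1+s)))
    (V : Set ℝ)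
    (hV : V = {y : ℝ | ∃ h s : ℝ, 0 ≤ h ∧ h ≤ (1-q)/q ∧ 0 ≤ s ∧ s ≤ q/(1-q) ∧
      ¬(h = (1-q)/q ∧ s = q/(1-q)) ∧ y = f h s}) :
    ((1 / Real.exp 1 ≤ (m : ℝ)/(n : ℝ)) →
      IsLeast V (q * Real.logb 2 (m : ℝ) + (1-q) * Real.logb 2 (n : ℝ))) ∧
    ((m : ℝ)/(n : ℝ) < 1 / Real.exp 1 → Real.exp 1 * (m : ℝ) / (n : ℝ) ≤ q →
      IsLeast V (Real.logb 2 ((m : ℝ)/q))) ∧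
    ((m : ℝ)/(n : ℝ) < 1 / Real.exp 1 → q < Real.exp 1 * (m : ℝ) / (n : ℝ) →
      IsLeast V (Real.logb 2 (n : ℝ) -
        q * ((n : ℝ) * Real.logb 2 (Real.exp 1)) / ((m : ℝ) * Real.exp 1))) := by
  have hq1' : (0:ℝ) < 1 - q := by linarith
  have hmR : (0:ℝ) < (m:ℝ) := by exact_mod_cast hm
  have hnR : (0:ℝ) < (n:ℝ) := by exact_mod_cast lt_of_lt_of_le hm hmn
  have hmnR : (m:ℝ) ≤ (n:ℝ) := by exact_mod_cast hmn
  have he : (0:ℝ) < Real.exp 1 := Real.exp_pos 1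
  have hcorner : ¬((0:ℝ) = (1-q)/q ∧ (0:ℝ) = q/(1-q)) := by
    rintro ⟨-, h2⟩
    exact absurd h2.symm (ne_of_gt (div_pos hq0 hq1'))
  -- generic lower-bound extraction
  have lb_gen : ∀ c : ℝ,
      (∀ a h s : ℝ, 0 ≤ h → 0 ≤ s → 0 ≤ a → a ≤ 1 → a/(1+h) ≤ q →
        a/(1+h) + (1-a)*(s/(1+s)) = q →
        c ≤ a * Real.logb 2 ((m:ℝ)*(1+h)) + (1-a) * Real.logb 2 ((n:ℝ)*(1+s))) →
      ∀ y ∈ V, c ≤ y := by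
    intro c hbound y hy
    rw [hV] at hy
    obtain ⟨h, s, hh0, hh1, hs0, hs1, hcn, rfl⟩ := hy
    obtain ⟨a, ha0, ha1, hau, hcon, ea, eb⟩ :=
      f_setup q h s hq0 hq1 hh0 hh1 hs0 hs1 hcn
    rw [hf, ea, eb]
    exact hbound a h s hh0 hs0 ha0 ha1 hau hcon
  refine ⟨?_, ?_, ?_⟩
  · -- Case 1 : 1/e ≤ m/n
    intro hcase
    have hen : (n:ℝ) ≤ Real.exp 1 * (m:ℝ) := by
      rw [div_le_div_iff₀ he hnR] at hcase
      nlinarith [hcase]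
    constructor
    · rw [hV]
      refine ⟨0, 0, le_refl 0, by positivity, le_refl 0, by positivity, hcorner, ?_⟩
      rw [hf]
      norm_num
    · exact lb_gen _ (fun a h s hh0 hs0 ha0 ha1 hau _ =>
        case1 m n hmR hnR hmnR hen q a h s hq0 hh0 hs0 ha0 ha1 hau)
  · -- Case 2 : m/n < 1/e and e*m/n ≤ q
    intro _ hcase2
    have hen : Real.exp 1 * (m:ℝ) ≤ q * (n:ℝ) := by
      rw [div_le_iff₀ hnR] at hcase2
      linarith
    constructor
    · rw [hV]
      refine ⟨(1-q)/q, 0, by positivity, le_refl _, le_refl 0, by positivity, ?_, ?_⟩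
      · rintro ⟨-, h2⟩
        exact absurd h2.symm (ne_of_gt (div_pos hq0 hq1'))
      · rw [hf]
        have e0 : (1:ℝ) - q - (1-q)/q*q = 0 := by field_simp; ring
        have e1 : (1:ℝ) + (1-q)/q = 1/q := by field_simp; ring
        simp only [mul_zero, zero_mul, sub_zero, div_one, add_zero, mul_one]
        rw [show ((1:ℝ)-q) - (1-q)/q*q = 0 from by field_simp; ring, e1]
        rw [show (m:ℝ) * (1/q) = (m:ℝ)/q from by ring,
          show q * (1/q) = (1:ℝ) from by field_simp, zero_mul, add_zero, one_mul]
    · exact lb_gen _ (fun a h s hh0 hs0 ha0 ha1 hau _ =>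
        case2 m n q a h s hmR hnR hen hq0 hh0 hs0 ha0 ha1 hau)
  · -- Case 3 : m/n < 1/e and q < e*m/n
    intro hcase1 hcase2
    have hemn : Real.exp 1 * (m:ℝ) < (n:ℝ) := by
      rw [div_lt_div_iff₀ hnR he] at hcase1
      nlinarith [hcase1]
    have hqn : q * (n:ℝ) < Real.exp 1 * (m:ℝ) := by
      rw [lt_div_iff₀ hnR] at hcase2
      linarith
    constructor
    · rw [hV]
      set H : ℝ := (n:ℝ)/(Real.exp 1 * (m:ℝ)) with hH
      have hH1 : (1:ℝ) < H := by
        rw [hH, lt_div_iff₀ (by positivity)]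
        linarith
      have hHq : H ≤ 1/q := by
        rw [hH, div_le_div_iff₀ (by positivity) hq0]
        nlinarith [hqn]
      refine ⟨H - 1, 0, by linarith, ?_, le_refl 0, by positivity, ?_, ?_⟩
      · rw [div_eq_mul_inv, sub_mul]
        have : H ≤ q⁻¹ := by rwa [one_div] at hHq
        have h1 : 1 * q⁻¹ = q⁻¹ := one_mul _
        calc H - 1 ≤ q⁻¹ - 1 := by linarith
          _ ≤ q⁻¹ - 1 * q⁻¹ * q * 1 := by
              rw [mul_one, one_mul, inv_mul_cancel₀ hq0.ne']
          _ = 1 * q⁻¹ - q * q⁻¹ := by field_simp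
      · rintro ⟨-, h2⟩
        exact absurd h2.symm (ne_of_gt (div_pos hq0 hq1'))
      · rw [hf]
        simp only [mul_zero, zero_mul, sub_zero, div_one, add_zero, mul_one]
        rw [show (1:ℝ) + (H - 1) = H from by ring]
        rw [show (m:ℝ) * H = (n:ℝ)/Real.exp 1 from by rw [hH]; field_simp]
        rw [Real.logb_div (ne_of_gt hnR) (ne_of_gt he), hH]
        field_simp
        ring
    · exact lb_gen _ (fun a h s hh0 hs0 ha0 ha1 hau hcon =>
        case3 (m:ℝ) (n:ℝ) hmR hnR q a h s hq0 hh0 hs0 ha0 ha1 hau hcon)
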